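/- Let ℓ₁,…,ℓₙ be positive integers, ℓ = max_k ℓ_k, γ_k = ℓ/ℓ_k, ‖γ‖ = Σ_{k=1}^n γ_k, and ρ(x) = (Σ_{k=1}^n x_k^{2ℓ_k})^{1/(2ℓ)} for x ∈ ℝⁿ. Then for every real s: the integral ∫_{{x : ρ(x) ≥ 1}} ρ(x)^s dx is finite if and only if s < -‖γ‖; and in that case, for every t > 0, ∫_{{x : ρ(x) ≥ t}} ρ(x)^s dx = t^{s+‖γ‖} ∫_{{x : ρ(x) ≥ 1}} ρ(x)^s dx. -/

import Mathlib

open MeasureTheory Real Set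
open scoped ENNReal

set_option linter.unusedVariables false

noncomputable section

namespace Semielliptic

/-- `σ(x) = Σ_k x_k^{2ℓ_k}` -/
def sig {n : ℕ} (l : Fin n → ℕ) (x : Fin n → ℝ) : ℝ := ∑ k, x k ^ (2 * l k)

/-- `ℓ = max_k ℓ_k` -/
def lmax {n : ℕ} (l : Fin n → ℕ) : ℕ := Finset.univ.sup l

/-- the anisotropic length `ρ(x) = σ(x)^{1/(2ℓ)}` -/
def rho {n : ℕ} (l : Fin n → ℕ) (x : Fin n → ℝ) : ℝ :=
  sig l x ^ ((1 : ℝ) / (2 * (lmax l : ℝ)))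

/-- `γ_k = ℓ/ℓ_k` -/
def gam {n : ℕ} (l : Fin n → ℕ) (k : Fin n) : ℝ := (lmax l : ℝ) / (l k : ℝ)

/-- `‖γ‖ = Σ_k γ_k` -/
def gnorm {n : ℕ} (l : Fin n → ℕ) : ℝ := ∑ k, gam l k

/-- `α·γ = Σ_k α_k γ_k` -/
def dotg {n : ℕ} (l : Fin n → ℕ) (a : Fin n → ℕ) : ℝ := ∑ k, (a k : ℝ) * gam l k

/-- the partial derivative in the k-th coordinate direction -/
def pd {n : ℕ} {E : Type*} [NormedAddCommGroup E] [NormedSpace ℝ E] (k : Fin n)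
    (f : (Fin n → ℝ) → E) : (Fin n → ℝ) → E :=
  fun x => fderiv ℝ f x (Pi.single k 1)

/-- the multi-index partial derivative `∂^α` -/
def pdM {n : ℕ} {E : Type*} [NormedAddCommGroup E] [NormedSpace ℝ E] (a : Fin n → ℕ)
    (f : (Fin n → ℝ) → E) : (Fin n → ℝ) → E :=
  Fin.foldr n (fun k g => (pd k)^[a k] g) f

/-- the symbol `L(x) = Σ_{α·γ=ℓ} A_α (ix)^α` -/
def symb {n m : ℕ} {ι : Type} [Fintype ι] (l : Fin n → ℕ)
    (A : ι → Matrix (Fin m) (Fin m) ℂ) (mi : ι → Fin n → ℕ)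
    (x : Fin n → ℝ) : Matrix (Fin m) (Fin m) ℂ :=
  ∑ i, (∏ k, (Complex.I * (x k : ℂ)) ^ (mi i k)) • A i

/-- the Frobenius (Hilbert–Schmidt) norm of a matrix -/
def fro {m : ℕ} (M : Matrix (Fin m) (Fin m) ℂ) : ℝ :=
  Real.sqrt (∑ i, ∑ j, ‖M i j‖ ^ 2)

/-- the integrand `e^{ix·z}(iz)^β σ(z) e^{-tσ(z)} L(z)⁻¹` -/
def jker {n m : ℕ} {ι : Type} [Fintype ι] (l : Fin n → ℕ)
    (A : ι → Matrix (Fin m) (Fin m) ℂ) (mi : ι → Fin n → ℕ)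
    (b : Fin n → ℕ) (x : Fin n → ℝ) (t : ℝ) (z : Fin n → ℝ) : Matrix (Fin m) (Fin m) ℂ :=
  (Complex.exp (Complex.I * ((∑ k, x k * z k : ℝ) : ℂ)) *
      (∏ k, (Complex.I * (z k : ℂ)) ^ (b k)) *
      ((sig l z : ℝ) : ℂ) * ((Real.exp (-(t * sig l z)) : ℝ) : ℂ)) • (symb l A mi z)⁻¹

/-- `J_β(x,t) = ∫_{ℝⁿ} e^{ix·z}(iz)^β σ(z) e^{-tσ(z)} L(z)⁻¹ dz`, computed entrywise -/
def Jmat {n m : ℕ} {ι : Type} [Fintype ι] (l : Fin n → ℕ)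
    (A : ι → Matrix (Fin m) (Fin m) ℂ) (mi : ι → Fin n → ℕ)
    (b : Fin n → ℕ) (x : Fin n → ℝ) (t : ℝ) : Matrix (Fin m) (Fin m) ℂ :=
  Matrix.of fun i j => ∫ z : Fin n → ℝ, jker l A mi b x t z i j

/-- `F_β(x) = (2π)^{-n} ∫_0^∞ J_β(x,t) dt`, computed entrywise -/
def Fmat {n m : ℕ} {ι : Type} [Fintype ι] (l : Fin n → ℕ)
    (A : ι → Matrix (Fin m) (Fin m) ℂ) (mi : ι → Fin n → ℕ)
    (b : Fin n → ℕ) (x : Fin n → ℝ) : Matrix (Fin m) (Fin m) ℂ :=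
  Matrix.of fun i j =>
    ((((2 * Real.pi) ^ n)⁻¹ : ℝ) : ℂ) * ∫ t in Ioi (0 : ℝ), Jmat l A mi b x t i j

/-- `v` is the weak derivative `∂^α u`: tested against scalar test functions. -/
def IsWeakDeriv {n m : ℕ} (a : Fin n → ℕ) (u v : (Fin n → ℝ) → Fin m → ℂ) : Prop :=
  ∀ φ : (Fin n → ℝ) → ℝ, ContDiff ℝ (⊤ : ℕ∞) φ → HasCompactSupport φ →
    ∫ x : Fin n → ℝ, pdM a φ x • u x
      = ((-1 : ℝ) ^ (∑ k, a k)) • ∫ x : Fin n → ℝ, φ x • v x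

open Classical in
/-- the (finite) set of multi-indices with `α·γ ≤ r` -/
def idxSet {n : ℕ} (l : Fin n → ℕ) (r : ℝ) : Finset (Fin n → ℕ) :=
  (Finset.image (fun f : Fin n → Fin (⌈r⌉₊ + 1) => fun k => (f k : ℕ)) Finset.univ).filter
    (fun a => dotg l a ≤ r)

/-- `𝓛u = Σ_{α·γ=ℓ} A_α ∂^α u`, computed from the given family of (weak) derivatives of `u` -/
def Lop {n m : ℕ} {ι : Type} [Fintype ι] (A : ι → Matrix (Fin m) (Fin m) ℂ)
    (mi : ι → Fin n → ℕ) (du : (Fin n → ℕ) → (Fin n → ℝ) → Fin m → ℂ)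
    (x : Fin n → ℝ) : Fin m → ℂ :=
  ∑ i, (A i).mulVec (du (mi i) x)

/-- `𝓛φ` for smooth `φ` (classical derivatives) -/
def LopC {n m : ℕ} {ι : Type} [Fintype ι] (A : ι → Matrix (Fin m) (Fin m) ℂ)
    (mi : ι → Fin n → ℕ) (φ : (Fin n → ℝ) → Fin m → ℂ) (x : Fin n → ℝ) : Fin m → ℂ :=
  ∑ i, (A i).mulVec (pdM (mi i) φ x)

/-- the formal adjoint `𝓛*φ = Σ (-1)^{|α|} A_α* ∂^α φ` on smooth functions -/
def LopAdj {n m : ℕ} {ι : Type} [Fintype ι] (A : ι → Matrix (Fin m) (Fin m) ℂ)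
    (mi : ι → Fin n → ℕ) (φ : (Fin n → ℝ) → Fin m → ℂ) (x : Fin n → ℝ) : Fin m → ℂ :=
  ∑ i, ((-1 : ℂ) ^ (∑ k, mi i k)) • (A i).conjTranspose.mulVec (pdM (mi i) φ x)

/-- the pairing `u·v = v* u` in `ℂ^m` -/
def pairc {m : ℕ} (u v : Fin m → ℂ) : ℂ := ∑ j, u j * (starRingEnd ℂ) (v j)

section Helpers
variable {n : ℕ} {l : Fin n → ℕ}

lemma sig_nonneg (l : Fin n → ℕ) (x : Fin n → ℝ) : 0 ≤ sig l x :=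
  Finset.sum_nonneg fun k _ => by rw [mul_comm, pow_mul]; positivity

lemma rho_nonneg (l : Fin n → ℕ) (x : Fin n → ℝ) : 0 ≤ rho l x :=
  Real.rpow_nonneg (sig_nonneg l x) _

lemma continuous_sig (l : Fin n → ℕ) : Continuous (sig l) :=
  continuous_finset_sum _ fun k _ => (continuous_apply k).pow _

lemma continuous_rho (l : Fin n → ℕ) : Continuous (rho l) :=
  (continuous_sig l).rpow_const fun _ => Or.inr (by positivity)

lemma lmax_pos (hn : 0 < n) (hl : ∀ k, 0 < l k) : 0 < lmax l :=
  lt_of_lt_of_le (hl ⟨0, hn⟩) (Finset.le_sup (Finset.mem_univ _))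

lemma gam_pos (hn : 0 < n) (hl : ∀ k, 0 < l k) (k : Fin n) : 0 < gam l k :=
  div_pos (by exact_mod_cast lmax_pos hn hl) (by exact_mod_cast hl k)

lemma gnorm_pos (hn : 0 < n) (hl : ∀ k, 0 < l k) : 0 < gnorm l :=
  Finset.sum_pos (fun k _ => gam_pos hn hl k) ⟨⟨0, hn⟩, Finset.mem_univ _⟩

def Phi (l : Fin n → ℕ) (t : ℝ) : (Fin n → ℝ) →ₗ[ℝ] (Fin n → ℝ) :=
  Matrix.toLin' (Matrix.diagonal fun k => t ^ gam l k)

lemma Phi_apply (t : ℝ) (x : Fin n → ℝ) (k : Fin n) :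
    Phi l t x k = t ^ gam l k * x k := by
  simp [Phi, Matrix.toLin'_apply, Matrix.mulVec_diagonal]

lemma det_Phi {t : ℝ} (ht : 0 < t) : LinearMap.det (Phi l t) = t ^ gnorm l := by
  rw [Phi, LinearMap.det_toLin', Matrix.det_diagonal, gnorm]
  simp_rw [Real.rpow_def_of_pos ht]
  rw [← Real.exp_sum, ← Finset.mul_sum]

lemma sig_phi (hl : ∀ k, 0 < l k) {t : ℝ} (ht : 0 < t) (x : Fin n → ℝ) :
    sig l (Phi l t x) = t ^ (2 * (lmax l : ℝ)) * sig l x := by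
  unfold sig
  rw [Finset.mul_sum]
  refine Finset.sum_congr rfl fun k _ => ?_
  rw [Phi_apply, mul_pow]
  congr 1
  rw [← Real.rpow_natCast (t ^ gam l k) (2 * l k), ← Real.rpow_mul ht.le]
  congr 1
  have h : (l k : ℝ) ≠ 0 := by exact_mod_cast (hl k).ne'
  rw [gam]
  push_cast
  field_simp

lemma rho_phi (hn : 0 < n) (hl : ∀ k, 0 < l k) {t : ℝ} (ht : 0 < t) (x : Fin n → ℝ) :
    rho l (Phi l t x) = t * rho l x := by
  have hL : (0:ℝ) < 2 * (lmax l : ℝ) := by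
    have := lmax_pos hn hl; positivity
  unfold rho
  rw [sig_phi hl ht, Real.mul_rpow (by positivity) (sig_nonneg l x)]
  congr 1
  rw [← Real.rpow_mul ht.le, mul_one_div_cancel hL.ne', Real.rpow_one]


lemma measurable_phi (l : Fin n → ℕ) (t : ℝ) : Measurable (Phi l t) :=
  (Phi l t).continuous_of_finiteDimensional.measurable

lemma lintegral_comp_phi (hn : 0 < n) (hl : ∀ k, 0 < l k) {t : ℝ} (ht : 0 < t)
    {g : (Fin n → ℝ) → ℝ≥0∞} (hg : Measurable g) :
    ∫⁻ x, g (Phi l t x) = ENNReal.ofReal (t ^ (-gnorm l)) * ∫⁻ x, g x := by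
  have hpos : (0:ℝ) < t ^ gnorm l := Real.rpow_pos_of_pos ht _
  have hdet : LinearMap.det (Phi l t) ≠ 0 := by rw [det_Phi ht]; exact hpos.ne'
  have hmap := Measure.map_linearMap_addHaar_eq_smul_addHaar
    (volume : Measure (Fin n → ℝ)) hdet
  have h2 := lintegral_map (μ := (volume : Measure (Fin n → ℝ))) hg (measurable_phi l t)
  rw [hmap, lintegral_smul_measure, det_Phi ht, abs_of_pos (inv_pos.2 hpos),
    ← Real.rpow_neg ht.le] at h2
  exact h2.symm

lemma lint_rho_scale (hn : 0 < n) (hl : ∀ k, 0 < l k) {t : ℝ} (ht : 0 < t)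
    {g : ℝ → ℝ≥0∞} (hg : Measurable g) :
    ∫⁻ x, g (t * rho l x) = ENNReal.ofReal (t ^ (-gnorm l)) * ∫⁻ x, g (rho l x) := by
  have h1 : ∫⁻ x, g (t * rho l x) = ∫⁻ x, (fun y => g (rho l y)) (Phi l t x) :=
    lintegral_congr fun x => by show g (t * rho l x) = g (rho l (Phi l t x)); rw [rho_phi hn hl ht]
  rw [h1, lintegral_comp_phi hn hl ht (g := fun y => g (rho l y))
    (hg.comp (continuous_rho l).measurable)]

lemma key (hn : 0 < n) (hl : ∀ k, 0 < l k) (s : ℝ) {t : ℝ} (ht : 0 < t)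
    {S : Set ℝ} (hS : MeasurableSet S) (hSpos : S ⊆ Ioi 0) :
    ∫⁻ x in {x | t⁻¹ * rho l x ∈ S}, ENNReal.ofReal (rho l x ^ s)
      = ENNReal.ofReal (t ^ (s + gnorm l)) *
        ∫⁻ x in {x | rho l x ∈ S}, ENNReal.ofReal (rho l x ^ s) := by
  classical
  set g : ℝ → ℝ≥0∞ :=
    S.indicator (fun r => ENNReal.ofReal (Real.exp (Real.log (t * r) * s))) with hgdef
  have hg : Measurable g :=
    Measurable.indicator
      ((Real.measurable_log.comp (measurable_const_mul t)).mul_const s).exp.ennreal_ofReal hS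
  -- pointwise identity: g (t⁻¹ * r) for r = rho l x
  have hgval : ∀ r : ℝ, 0 ≤ r → g (t⁻¹ * r)
      = {y : ℝ | t⁻¹ * y ∈ S}.indicator (fun r => ENNReal.ofReal (r ^ s)) r := by
    intro r hr
    by_cases h : t⁻¹ * r ∈ S
    · rw [hgdef, Set.indicator_of_mem h,
        Set.indicator_of_mem (show r ∈ {y : ℝ | t⁻¹ * y ∈ S} from h)]
      have : t * (t⁻¹ * r) = r := by field_simp
      rw [this, Real.rpow_def_of_pos]
      have h0 : 0 < t⁻¹ * r := hSpos h
      nlinarith [inv_pos.2 ht]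
    · rw [hgdef, Set.indicator_of_notMem h,
        Set.indicator_of_notMem (show r ∉ {y : ℝ | t⁻¹ * y ∈ S} from h)]
  have hmeasS1 : MeasurableSet {x : Fin n → ℝ | t⁻¹ * rho l x ∈ S} :=
    ((continuous_rho l).measurable.const_mul t⁻¹) hS
  have hmeasS2 : MeasurableSet {x : Fin n → ℝ | rho l x ∈ S} :=
    (continuous_rho l).measurable hS
  have hLHS : ∫⁻ x in {x | t⁻¹ * rho l x ∈ S}, ENNReal.ofReal (rho l x ^ s)
      = ∫⁻ x, g (t⁻¹ * rho l x) := by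
    rw [← lintegral_indicator hmeasS1]
    refine lintegral_congr fun x => ?_
    rw [hgval _ (rho_nonneg l x)]
    by_cases h : t⁻¹ * rho l x ∈ S
    · rw [Set.indicator_of_mem (show x ∈ {x : Fin n → ℝ | t⁻¹ * rho l x ∈ S} from h),
        Set.indicator_of_mem (show rho l x ∈ {y : ℝ | t⁻¹ * y ∈ S} from h)]
    · rw [Set.indicator_of_notMem (show x ∉ {x : Fin n → ℝ | t⁻¹ * rho l x ∈ S} from h),
        Set.indicator_of_notMem (show rho l x ∉ {y : ℝ | t⁻¹ * y ∈ S} from h)]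
  have hRHS : ∫⁻ x, g (rho l x)
      = ENNReal.ofReal (t ^ s) * ∫⁻ x in {x | rho l x ∈ S}, ENNReal.ofReal (rho l x ^ s) := by
    rw [← lintegral_indicator hmeasS2, ← lintegral_const_mul' _ _ ENNReal.ofReal_ne_top]
    refine lintegral_congr fun x => ?_
    by_cases h : rho l x ∈ S
    · rw [hgdef, Set.indicator_of_mem h,
        Set.indicator_of_mem (show x ∈ {x : Fin n → ℝ | rho l x ∈ S} from h)]
      have hpos : 0 < rho l x := hSpos h
      rw [← ENNReal.ofReal_mul (Real.rpow_nonneg ht.le s),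
        ← Real.mul_rpow ht.le (rho_nonneg l x),
        Real.rpow_def_of_pos (by positivity : (0:ℝ) < t * rho l x)]
    · rw [hgdef, Set.indicator_of_notMem h,
        Set.indicator_of_notMem (show x ∉ {x : Fin n → ℝ | rho l x ∈ S} from h), mul_zero]
  have hscale := lint_rho_scale hn hl (inv_pos.2 ht) hg
  have hinv : (t⁻¹ : ℝ) ^ (-gnorm l) = t ^ gnorm l := by
    rw [Real.inv_rpow ht.le, Real.rpow_neg ht.le, inv_inv]
  rw [hLHS, hscale, hinv, hRHS, ← mul_assoc, ← ENNReal.ofReal_mul (Real.rpow_nonneg ht.le _),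
    ← Real.rpow_add ht, add_comm]

lemma F_scale (hn : 0 < n) (hl : ∀ k, 0 < l k) (s : ℝ) {t : ℝ} (ht : 0 < t) :
    ∫⁻ x in {x : Fin n → ℝ | t ≤ rho l x}, ENNReal.ofReal (rho l x ^ s)
      = ENNReal.ofReal (t ^ (s + gnorm l)) *
        ∫⁻ x in {x : Fin n → ℝ | 1 ≤ rho l x}, ENNReal.ofReal (rho l x ^ s) := by
  have h := key hn hl s ht (measurableSet_Ici : MeasurableSet (Ici (1:ℝ)))
    (fun r hr => Set.mem_Ioi.2 (lt_of_lt_of_le one_pos (Set.mem_Ici.1 hr)))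
  have e1 : {x : Fin n → ℝ | t⁻¹ * rho l x ∈ Ici 1} = {x | t ≤ rho l x} := by
    ext x
    rw [Set.mem_setOf_eq, Set.mem_setOf_eq, Set.mem_Ici, le_inv_mul_iff₀ ht, mul_one]
  have e2 : {x : Fin n → ℝ | rho l x ∈ Ici 1} = {x | 1 ≤ rho l x} := rfl
  rwa [e1, e2] at h

def Aset (l : Fin n → ℕ) (j : ℕ) : Set (Fin n → ℝ) :=
  {x | rho l x ∈ Ico ((2:ℝ)^j) ((2:ℝ)^(j+1))}

lemma H_scale (hn : 0 < n) (hl : ∀ k, 0 < l k) (s : ℝ) (j : ℕ) :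
    ∫⁻ x in Aset l j, ENNReal.ofReal (rho l x ^ s)
      = ENNReal.ofReal (((2:ℝ)^j) ^ (s + gnorm l)) *
        ∫⁻ x in {x : Fin n → ℝ | rho l x ∈ Ico 1 2}, ENNReal.ofReal (rho l x ^ s) := by
  have h2j : (0:ℝ) < 2^j := by positivity
  have h := key hn hl s h2j (measurableSet_Ico : MeasurableSet (Ico (1:ℝ) 2))
    (fun r hr => lt_of_lt_of_le one_pos hr.1)
  have e1 : {x : Fin n → ℝ | ((2:ℝ)^j)⁻¹ * rho l x ∈ Ico 1 2} = Aset l j := by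
    ext x
    rw [Aset, Set.mem_setOf_eq, Set.mem_setOf_eq, Set.mem_Ico, Set.mem_Ico,
      le_inv_mul_iff₀ h2j, mul_one, inv_mul_lt_iff₀ h2j]
    constructor
    · rintro ⟨ha, hb⟩; exact ⟨ha, by rw [pow_succ]; linarith⟩
    · rintro ⟨ha, hb⟩; refine ⟨ha, ?_⟩; rw [pow_succ] at hb; linarith
  rwa [e1] at h

lemma iUnion_Aset (l : Fin n → ℕ) : ⋃ j, Aset l j = {x | 1 ≤ rho l x} := by
  ext x
  simp only [Set.mem_iUnion, Aset, Set.mem_setOf_eq, Set.mem_Ico]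
  constructor
  · rintro ⟨j, hj, _⟩
    exact le_trans (one_le_pow₀ one_le_two) hj
  · intro hx
    set r := rho l x
    have hr0 : (0:ℝ) ≤ r := rho_nonneg l x
    have hfl : 1 ≤ ⌊r⌋₊ := Nat.le_floor (by exact_mod_cast hx)
    refine ⟨Nat.log 2 ⌊r⌋₊, ?_, ?_⟩
    · have h1 : 2 ^ Nat.log 2 ⌊r⌋₊ ≤ ⌊r⌋₊ := Nat.pow_log_le_self 2 (by omega)
      have h2 : (⌊r⌋₊ : ℝ) ≤ r := Nat.floor_le hr0
      calc (2:ℝ) ^ Nat.log 2 ⌊r⌋₊ = ((2 ^ Nat.log 2 ⌊r⌋₊ : ℕ) : ℝ) := by push_cast; ring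
        _ ≤ (⌊r⌋₊ : ℝ) := by exact_mod_cast h1
        _ ≤ r := h2
    · have h1 : ⌊r⌋₊ < 2 ^ (Nat.log 2 ⌊r⌋₊ + 1) :=
        Nat.lt_pow_succ_log_self (by norm_num) _
      have h2 : r < ⌊r⌋₊ + 1 := Nat.lt_floor_add_one r
      have h3 : (⌊r⌋₊ : ℝ) + 1 ≤ 2 ^ (Nat.log 2 ⌊r⌋₊ + 1) := by
        have : (⌊r⌋₊ + 1 : ℕ) ≤ 2 ^ (Nat.log 2 ⌊r⌋₊ + 1) := h1
        calc (⌊r⌋₊ : ℝ) + 1 = ((⌊r⌋₊ + 1 : ℕ) : ℝ) := by push_cast; ring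
          _ ≤ ((2 ^ (Nat.log 2 ⌊r⌋₊ + 1) : ℕ) : ℝ) := by exact_mod_cast this
          _ = 2 ^ (Nat.log 2 ⌊r⌋₊ + 1) := by push_cast; ring
      linarith


lemma Aset_measurable (l : Fin n → ℕ) (j : ℕ) : MeasurableSet (Aset l j) :=
  (continuous_rho l).measurable measurableSet_Ico

lemma Aset_disjoint_aux (l : Fin n → ℕ) {i j : ℕ} (h : i < j) :
    Disjoint (Aset l i) (Aset l j) := by
  rw [Set.disjoint_left]
  rintro x ⟨_, hx2⟩ ⟨hx3, _⟩
  have : (2:ℝ) ^ (i+1) ≤ 2 ^ j := pow_le_pow_right₀ one_le_two (by omega)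
  linarith

lemma Aset_disjoint (l : Fin n → ℕ) : Pairwise (Function.onFun Disjoint (Aset l)) := by
  intro i j hij
  rcases lt_or_gt_of_ne hij with h | h
  · exact Aset_disjoint_aux l h
  · exact (Aset_disjoint_aux l h).symm

lemma F_eq_sum (hn : 0 < n) (hl : ∀ k, 0 < l k) (s : ℝ) :
    ∫⁻ x in {x : Fin n → ℝ | 1 ≤ rho l x}, ENNReal.ofReal (rho l x ^ s)
      = (∑' j : ℕ, (ENNReal.ofReal ((2:ℝ) ^ (s + gnorm l))) ^ j) *
        ∫⁻ x in {x : Fin n → ℝ | rho l x ∈ Ico 1 2}, ENNReal.ofReal (rho l x ^ s) := by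
  rw [← iUnion_Aset l, lintegral_iUnion (Aset_measurable l) (Aset_disjoint l)]
  have hterm : ∀ j : ℕ, ∫⁻ x in Aset l j, ENNReal.ofReal (rho l x ^ s)
      = (ENNReal.ofReal ((2:ℝ) ^ (s + gnorm l))) ^ j *
        ∫⁻ x in {x : Fin n → ℝ | rho l x ∈ Ico 1 2}, ENNReal.ofReal (rho l x ^ s) := by
    intro j
    rw [H_scale hn hl s j]
    congr 1
    rw [← Real.rpow_natCast (2:ℝ) j, ← Real.rpow_mul (by norm_num : (0:ℝ) ≤ 2),
      mul_comm, Real.rpow_mul (by norm_num : (0:ℝ) ≤ 2), Real.rpow_natCast,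
      ENNReal.ofReal_pow (Real.rpow_nonneg (by norm_num) _)]
  rw [tsum_congr hterm, ENNReal.tsum_mul_right]

lemma shell_subset_ball (hn : 0 < n) (hl : ∀ k, 0 < l k) :
    {x : Fin n → ℝ | rho l x ∈ Ico 1 2} ⊆ Metric.closedBall 0 ((2:ℝ) ^ lmax l) := by
  have hL : 0 < lmax l := lmax_pos hn hl
  intro x hx
  rw [Metric.mem_closedBall, dist_zero_right]
  rw [pi_norm_le_iff_of_nonneg (by positivity)]
  intro k
  rw [Real.norm_eq_abs]
  by_contra hcon
  push_neg at hcon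
  have h1 : (2:ℝ) ^ lmax l < |x k| := hcon
  have h2 : ((2:ℝ) ^ lmax l) ^ (2 * l k) < |x k| ^ (2 * l k) :=
    pow_lt_pow_left₀ h1 (by positivity) (by have := hl k; omega)
  have h3 : |x k| ^ (2 * l k) = x k ^ (2 * l k) := by
    rw [pow_abs, abs_of_nonneg (by rw [mul_comm, pow_mul]; positivity)]
  have h4 : x k ^ (2 * l k) ≤ sig l x :=
    Finset.single_le_sum (f := fun i => x i ^ (2 * l i))
      (fun i _ => by rw [mul_comm, pow_mul]; positivity) (Finset.mem_univ k)
  have h5 : sig l x = rho l x ^ (2 * lmax l) := by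
    rw [rho, ← Real.rpow_natCast (sig l x ^ ((1:ℝ)/(2*(lmax l:ℝ)))) (2 * lmax l),
      ← Real.rpow_mul (sig_nonneg l x),
      show ((1:ℝ)/(2*(lmax l:ℝ))) * ((2 * lmax l : ℕ):ℝ) = 1 by
        have : ((lmax l:ℝ)) ≠ 0 := by positivity
        push_cast; field_simp,
      Real.rpow_one]
  have h6 : rho l x ^ (2 * lmax l) < 2 ^ (2 * lmax l) :=
    pow_lt_pow_left₀ hx.2 (rho_nonneg l x) (by omega)
  have h7 : (2:ℝ) ^ (2 * lmax l) ≤ ((2:ℝ) ^ lmax l) ^ (2 * l k) := by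
    rw [← pow_mul]
    exact pow_le_pow_right₀ one_le_two (by nlinarith [hl k, hL])
  nlinarith

lemma shell_lt_top (hn : 0 < n) (hl : ∀ k, 0 < l k) (s : ℝ) :
    ∫⁻ x in {x : Fin n → ℝ | rho l x ∈ Ico 1 2}, ENNReal.ofReal (rho l x ^ s) < ⊤ := by
  have hvol : volume {x : Fin n → ℝ | rho l x ∈ Ico 1 2} < ⊤ :=
    lt_of_le_of_lt (measure_mono (shell_subset_ball hn hl)) measure_closedBall_lt_top
  have hb : ∀ x ∈ {x : Fin n → ℝ | rho l x ∈ Ico 1 2},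
      ENNReal.ofReal (rho l x ^ s) ≤ ENNReal.ofReal ((2:ℝ) ^ |s|) := by
    intro x hx
    refine ENNReal.ofReal_le_ofReal ?_
    rcases le_or_gt 0 s with hs | hs
    · exact le_trans (Real.rpow_le_rpow (rho_nonneg l x) hx.2.le hs)
        (Real.rpow_le_rpow_of_exponent_le one_le_two (le_abs_self s))
    · exact le_trans (Real.rpow_le_one_of_one_le_of_nonpos hx.1 hs.le)
        (Real.one_le_rpow one_le_two (abs_nonneg s))
  calc ∫⁻ x in {x : Fin n → ℝ | rho l x ∈ Ico 1 2}, ENNReal.ofReal (rho l x ^ s)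
      ≤ ∫⁻ _ in {x : Fin n → ℝ | rho l x ∈ Ico 1 2}, ENNReal.ofReal ((2:ℝ) ^ |s|) :=
        setLIntegral_mono measurable_const hb
    _ = ENNReal.ofReal ((2:ℝ) ^ |s|) * volume {x : Fin n → ℝ | rho l x ∈ Ico 1 2} :=
        setLIntegral_const _ _
    _ < ⊤ := ENNReal.mul_lt_top ENNReal.ofReal_lt_top hvol


lemma shell_pos (hn : 0 < n) (hl : ∀ k, 0 < l k) (s : ℝ) :
    0 < ∫⁻ x in {x : Fin n → ℝ | rho l x ∈ Ico 1 2}, ENNReal.ofReal (rho l x ^ s) := by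
  set U : Set (Fin n → ℝ) := rho l ⁻¹' (Ioo 1 2) with hU
  have hUopen : IsOpen U := isOpen_Ioo.preimage (continuous_rho l)
  have hUne : U.Nonempty := by
    set ones : Fin n → ℝ := fun _ => (1:ℝ) with hones
    have hsig : sig l ones = (n:ℝ) := by
      rw [sig]; simp [hones]
    have hr0 : rho l ones = (n:ℝ) ^ ((1:ℝ)/(2*(lmax l:ℝ))) := by rw [rho, hsig]
    have hn' : (0:ℝ) < n := by exact_mod_cast hn
    have hr0pos : 0 < rho l ones := by rw [hr0]; exact Real.rpow_pos_of_pos hn' _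
    set t0 : ℝ := (3/2) / rho l ones with ht0
    have ht0pos : 0 < t0 := by positivity
    refine ⟨Phi l t0 ones, ?_⟩
    have : rho l (Phi l t0 ones) = t0 * rho l ones := rho_phi hn hl ht0pos ones
    rw [Set.mem_preimage, this, ht0, div_mul_cancel₀ _ hr0pos.ne']
    constructor <;> norm_num
  have hvolU : 0 < volume U := hUopen.measure_pos volume hUne
  have hsub : U ⊆ {x : Fin n → ℝ | rho l x ∈ Ico 1 2} := fun x hx => ⟨hx.1.le, hx.2⟩
  have hbound : ∀ x ∈ U, ENNReal.ofReal ((2:ℝ) ^ (-|s|)) ≤ ENNReal.ofReal (rho l x ^ s) := by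
    intro x hx
    refine ENNReal.ofReal_le_ofReal ?_
    rcases le_or_gt 0 s with hs | hs
    · refine le_trans (Real.rpow_le_one_of_one_le_of_nonpos one_le_two (neg_nonpos.2 (abs_nonneg s))) ?_
      exact Real.one_le_rpow hx.1.le hs
    · have habs : -|s| = s := by rw [abs_of_neg hs]; ring
      rw [habs]
      exact Real.rpow_le_rpow_of_nonpos (lt_trans one_pos hx.1) hx.2.le hs.le
  have h1 : 0 < ENNReal.ofReal ((2:ℝ) ^ (-|s|)) * volume U :=
    ENNReal.mul_pos (ENNReal.ofReal_pos.2 (Real.rpow_pos_of_pos two_pos _)).ne' hvolU.ne'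
  refine lt_of_lt_of_le h1 (le_trans ?_ (lintegral_mono_set hsub))
  rw [← setLIntegral_const U (ENNReal.ofReal ((2:ℝ) ^ (-|s|)))]
  exact setLIntegral_mono' hUopen.measurableSet hbound


lemma aesm_on (hn : 0 < n) (hl : ∀ k, 0 < l k) (s : ℝ) {t : ℝ} (ht : 0 < t) :
    AEStronglyMeasurable (fun x => rho l x ^ s)
      (volume.restrict {x : Fin n → ℝ | t ≤ rho l x}) := by
  have hA : MeasurableSet {x : Fin n → ℝ | t ≤ rho l x} :=
    (continuous_rho l).measurable measurableSet_Ici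
  refine ContinuousOn.aestronglyMeasurable ?_ hA
  exact ContinuousOn.rpow_const (continuous_rho l).continuousOn
    (fun x hx => Or.inl (ne_of_gt (lt_of_lt_of_le ht hx)))

end Helpers

/-- Lemma 2.1(a): `∫_{ρ≥1} ρ^s dx` is finite iff `s < -‖γ‖`, and then the scaling
identity `∫_{ρ≥t} ρ^s = t^{s+‖γ‖} ∫_{ρ≥1} ρ^s` holds for all `t > 0`. -/
theorem stmt0 (n : ℕ) (hn : 0 < n) (l : Fin n → ℕ) (hl : ∀ k, 0 < l k) (s : ℝ) :
    (IntegrableOn (fun x : Fin n → ℝ => rho l x ^ s) {x | 1 ≤ rho l x} volume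
      ↔ s < -gnorm l)
    ∧ (s < -gnorm l → ∀ t : ℝ, 0 < t →
        ∫ x in {x : Fin n → ℝ | t ≤ rho l x}, rho l x ^ s
          = t ^ (s + gnorm l) * ∫ x in {x : Fin n → ℝ | 1 ≤ rho l x}, rho l x ^ s) := by
  have hgn := gnorm_pos hn hl
  set c := ENNReal.ofReal ((2:ℝ) ^ (s + gnorm l)) with hc
  have hH := shell_lt_top hn hl s
  have hHpos := shell_pos hn hl s
  have hFsum := F_eq_sum hn hl s
  rw [ENNReal.tsum_geometric] at hFsum
  have hiff : (∫⁻ x in {x : Fin n → ℝ | 1 ≤ rho l x}, ENNReal.ofReal (rho l x ^ s)) < ⊤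
      ↔ s < -gnorm l := by
    constructor
    · intro hfin
      by_contra hcon
      push_neg at hcon
      have h1 : (1:ℝ) ≤ (2:ℝ) ^ (s + gnorm l) := Real.one_le_rpow one_le_two (by linarith)
      have hc1 : (1:ℝ≥0∞) ≤ c := ENNReal.one_le_ofReal.2 h1
      rw [hFsum, tsub_eq_zero_of_le hc1, ENNReal.inv_zero,
        ENNReal.top_mul hHpos.ne'] at hfin
      exact absurd hfin (lt_irrefl ⊤)
    · intro hs
      have h1 : (2:ℝ) ^ (s + gnorm l) < 1 :=
        Real.rpow_lt_one_of_one_lt_of_neg one_lt_two (by linarith)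
      have hc1 : c < 1 := ENNReal.ofReal_lt_one.2 h1
      rw [hFsum]
      exact ENNReal.mul_lt_top (ENNReal.inv_lt_top.2 (tsub_pos_of_lt hc1)) hH
  have hnonneg : ∀ (A : Set (Fin n → ℝ)),
      0 ≤ᵐ[volume.restrict A] fun x => rho l x ^ s :=
    fun A => ae_of_all _ fun x => Real.rpow_nonneg (rho_nonneg l x) s
  have hint : IntegrableOn (fun x : Fin n → ℝ => rho l x ^ s) {x | 1 ≤ rho l x} volume
      ↔ (∫⁻ x in {x : Fin n → ℝ | 1 ≤ rho l x}, ENNReal.ofReal (rho l x ^ s)) < ⊤ := by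
    constructor
    · intro h
      exact (hasFiniteIntegral_iff_ofReal (hnonneg _)).1 h.2
    · intro h
      exact ⟨aesm_on hn hl s one_pos, (hasFiniteIntegral_iff_ofReal (hnonneg _)).2 h⟩
  refine ⟨hint.trans hiff, fun hs t ht => ?_⟩
  have hb1 : ∫ x in {x : Fin n → ℝ | t ≤ rho l x}, rho l x ^ s
      = (∫⁻ x in {x : Fin n → ℝ | t ≤ rho l x}, ENNReal.ofReal (rho l x ^ s)).toReal :=
    integral_eq_lintegral_of_nonneg_ae (hnonneg _) (aesm_on hn hl s ht)
  have hb2 : ∫ x in {x : Fin n → ℝ | 1 ≤ rho l x}, rho l x ^ s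
      = (∫⁻ x in {x : Fin n → ℝ | 1 ≤ rho l x}, ENNReal.ofReal (rho l x ^ s)).toReal :=
    integral_eq_lintegral_of_nonneg_ae (hnonneg _) (aesm_on hn hl s one_pos)
  rw [hb1, hb2, F_scale hn hl s ht, ENNReal.toReal_mul,
    ENNReal.toReal_ofReal (Real.rpow_nonneg ht.le _)]

end Semielliptic
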